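/- Let L₁, L₂, L₃ be pairwise transverse Lagrangians in a symplectic vector space (V, ω), and define b(u,v) = ω(u, σ_{L₁,L₃} v) for u, v ∈ L₂, where σ_{L₁,L₃} = I ⊕ -I with respect to V = L₁ ⊕ L₃. Then b is a symmetric nondegenerate bilinear form on L₂. -/

import Mathlib

/-- the Maslov form b(u,v) = ω(u, σ_{L₁,L₃} v) is a symmetric
nondegenerate bilinear form on L₂, for pairwise transverse Lagrangians L₁, L₂, L₃. -/
theorem stmt8 (V : Type*) [AddCommGroup V] [Module ℝ V] [FiniteDimensional ℝ V]
    (ω : LinearMap.BilinForm ℝ V) (halt : ω.IsAlt) (hnd : ω.Nondegenerate)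
    (L₁ L₂ L₃ : Submodule ℝ V)
    (hL₁ : ω.orthogonal L₁ = L₁) (hL₂ : ω.orthogonal L₂ = L₂) (hL₃ : ω.orthogonal L₃ = L₃)
    (h12 : L₁ ⊓ L₂ = ⊥) (h23 : L₂ ⊓ L₃ = ⊥) (h13 : L₁ ⊓ L₃ = ⊥)
    (hcompl : IsCompl L₁ L₃)
    (σ : V →ₗ[ℝ] V) (hσ₁ : ∀ x ∈ L₁, σ x = x) (hσ₃ : ∀ x ∈ L₃, σ x = -x) :
    (∀ u ∈ L₂, ∀ v ∈ L₂, ω u (σ v) = ω v (σ u)) ∧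
    (∀ u ∈ L₂, (∀ v ∈ L₂, ω u (σ v) = 0) → u = 0) := by
  have hrefl : ω.IsRefl := halt.isRefl
  -- isotropy of each Lagrangian
  have hiso : ∀ (L : Submodule ℝ V), ω.orthogonal L = L →
      ∀ x ∈ L, ∀ y ∈ L, ω x y = 0 := by
    intro L hL x hx y hy
    rw [← hL] at hy
    exact hy x hx
  -- projections
  set P : V →ₗ[ℝ] L₁ := L₁.linearProjOfIsCompl L₃ hcompl with hP
  set Q : V →ₗ[ℝ] L₃ := L₃.linearProjOfIsCompl L₁ hcompl.symm with hQ
  have hsum : ∀ x : V, (P x : V) + (Q x : V) = x := fun x =>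
    Submodule.projection_add_projection_eq_self hcompl x
  have hσ : ∀ x : V, σ x = (P x : V) - (Q x : V) := by
    intro x
    conv_lhs => rw [← hsum x]
    rw [map_add, hσ₁ _ (P x).2, hσ₃ _ (Q x).2, sub_eq_add_neg]
  -- expand ω u (σ v)
  have hexp : ∀ u ∈ L₂, ∀ v : V, ω u (σ v) = - ω (P u : V) (Q v : V) - ω (P v : V) (Q u : V) := by
    intro u hu v
    rw [hσ]
    conv_lhs => rw [← hsum u]
    rw [map_add, LinearMap.add_apply, map_sub, map_sub,
      hiso L₁ hL₁ _ (P u).2 _ (P v).2, hiso L₃ hL₃ _ (Q u).2 _ (Q v).2,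
      ← halt.neg_eq (P v : V) (Q u : V)]
    ring
  constructor
  · intro u hu v hv
    rw [hexp u hu v, hexp v hv u]
    ring
  · intro u hu h
    -- Lagrangians all have the same dimension
    have hdim : ∀ (L : Submodule ℝ V), ω.orthogonal L = L →
        2 * Module.finrank ℝ L = Module.finrank ℝ V := by
      intro L hL
      have := LinearMap.BilinForm.finrank_orthogonal hnd L
      rw [hL] at this
      have hle : Module.finrank ℝ L ≤ Module.finrank ℝ V := Submodule.finrank_le L
      omega
    have hdim12 : Module.finrank ℝ L₂ = Module.finrank ℝ L₁ := by
      have := hdim L₁ hL₁; have := hdim L₂ hL₂; omega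
    have hdim23 : Module.finrank ℝ L₂ = Module.finrank ℝ L₃ := by
      have := hdim L₃ hL₃; have := hdim L₂ hL₂; omega
    -- P restricted to L₂ is surjective onto L₁
    have hPinj : Function.Injective (P.comp L₂.subtype) := by
      rw [← LinearMap.ker_eq_bot]
      rw [Submodule.eq_bot_iff]
      rintro ⟨x, hx⟩ hker
      have : P x = 0 := hker
      have hx3 : x ∈ L₃ := (Submodule.linearProjOfIsCompl_apply_eq_zero_iff hcompl).1 this
      have : x ∈ L₂ ⊓ L₃ := ⟨hx, hx3⟩
      rw [h23] at this
      simpa using this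
    have hPsurj : Function.Surjective (P.comp L₂.subtype) :=
      (LinearMap.injective_iff_surjective_of_finrank_eq_finrank hdim12).1 hPinj
    have hQinj : Function.Injective (Q.comp L₂.subtype) := by
      rw [← LinearMap.ker_eq_bot]
      rw [Submodule.eq_bot_iff]
      rintro ⟨x, hx⟩ hker
      have : Q x = 0 := hker
      have hx1 : x ∈ L₁ := (Submodule.linearProjOfIsCompl_apply_eq_zero_iff hcompl.symm).1 this
      have : x ∈ L₁ ⊓ L₂ := ⟨hx1, hx⟩
      rw [h12] at this
      simpa using this
    have hQsurj : Function.Surjective (Q.comp L₂.subtype) :=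
      (LinearMap.injective_iff_surjective_of_finrank_eq_finrank hdim23).1 hQinj
    -- from the hypothesis, ω u · vanishes on both components
    -- ω u (σ v) = -ω u₁ v₃ - ω u₃ v₁ and ω u v = 0, while
    -- ω u v = ω u₁ v₃ + ω u₃ v₁ + 0, so combine:
    have huv : ∀ v ∈ L₂, ω u v = 0 := fun v hv => hiso L₂ hL₂ u hu v hv
    have hexpv : ∀ v ∈ L₂, ω u ((P v : V) + (Q v : V)) = 0 := by
      intro v hv; rw [hsum v]; exact huv v hv
    have hexpv' : ∀ v ∈ L₂, ω u ((P v : V) - (Q v : V)) = 0 := by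
      intro v hv; rw [← hσ v]; exact h v hv
    have hP0 : ∀ v ∈ L₂, ω u (P v : V) = 0 := by
      intro v hv
      have h1 := hexpv v hv
      have h2 := hexpv' v hv
      rw [map_add] at h1; rw [map_sub] at h2
      linarith
    have hQ0 : ∀ v ∈ L₂, ω u (Q v : V) = 0 := by
      intro v hv
      have h1 := hexpv v hv
      have h2 := hexpv' v hv
      rw [map_add] at h1; rw [map_sub] at h2
      linarith
    -- hence ω u vanishes on L₁ and L₃, hence on V
    apply hnd.1
    intro x
    obtain ⟨x₁, hx₁, x₃, hx₃, rfl⟩ : ∃ a ∈ L₁, ∃ b ∈ L₃, a + b = x := by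
      have hx : x ∈ L₁ ⊔ L₃ := by rw [hcompl.sup_eq_top]; trivial
      exact Submodule.mem_sup.1 hx
    obtain ⟨v, hv⟩ := hPsurj ⟨x₁, hx₁⟩
    obtain ⟨w, hw⟩ := hQsurj ⟨x₃, hx₃⟩
    have h1 : ω u x₁ = 0 := by
      have := hP0 v v.2
      rw [show (P v : V) = x₁ by rw [show P (v : V) = ⟨x₁, hx₁⟩ from hv]] at this
      exact this
    have h3 : ω u x₃ = 0 := by
      have := hQ0 w w.2
      rw [show (Q w : V) = x₃ by rw [show Q (w : V) = ⟨x₃, hx₃⟩ from hw]] at this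
      exact this
    rw [map_add, h1, h3, add_zero]
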